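/- Let γ(s,t) be an arclength-parametrized inextensible flow of pseudo null curves in E⁴₁ with pseudo null Frenet frame {T, N, B₁, B₂}, curvatures k₁ = 1, k₂, k₃, flow ∂γ/∂t = α₁T + α₂N + α₃B₁ + α₄B₂ (so ∂α₁/∂s = α₄), ψ₂ = ⟨∂N/∂t, B₂⟩ and ψ₃ = ⟨∂B₁/∂t, B₂⟩. Then the third curvature satisfies the evolution equation ∂k₃/∂t = ∂ψ₃/∂s − ∂α₃/∂s − α₂k₂ + α₄k₃ − ψ₂k₃. -/

import Mathlib

/-!
Formalization of inextensible flows of partially null / pseudo null curves in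
Minkowski space-time `E⁴₁` (ℝ⁴ with signature (-,+,+,+)).
-/

noncomputable section

/-- The Minkowski bilinear form on `ℝ⁴` with signature `(-,+,+,+)`. -/
def mink (v w : Fin 4 → ℝ) : ℝ :=
  -(v 0 * w 0) + v 1 * w 1 + v 2 * w 2 + v 3 * w 3

/-- The Minkowski norm `‖v‖ = √|⟨v,v⟩|`. -/
def mnorm (v : Fin 4 → ℝ) : ℝ := Real.sqrt |mink v v|

section MinkLemmas

lemma mink_comm (u v : Fin 4 → ℝ) : mink u v = mink v u := by unfold mink; ring

lemma mink_add_left (u v w : Fin 4 → ℝ) : mink (u + v) w = mink u w + mink v w := by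
  simp [mink]; ring

lemma mink_sub_left (u v w : Fin 4 → ℝ) : mink (u - v) w = mink u w - mink v w := by
  simp [mink]; ring

lemma mink_smul_left (a : ℝ) (u w : Fin 4 → ℝ) : mink (a • u) w = a * mink u w := by
  simp [mink]; ring

lemma mink_add_right (u v w : Fin 4 → ℝ) : mink u (v + w) = mink u v + mink u w := by
  simp [mink]; ring

lemma mink_sub_right (u v w : Fin 4 → ℝ) : mink u (v - w) = mink u v - mink u w := by
  simp [mink]; ring

lemma mink_smul_right (a : ℝ) (u w : Fin 4 → ℝ) : mink u (a • w) = a * mink u w := by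
  simp [mink]; ring

lemma hasDerivAt_mink {u v : ℝ → Fin 4 → ℝ} {u' v' : Fin 4 → ℝ} {x : ℝ}
    (hu : HasDerivAt u u' x) (hv : HasDerivAt v v' x) :
    HasDerivAt (fun y => mink (u y) (v y)) (mink u' (v x) + mink (u x) v') x := by
  have hui : ∀ i, HasDerivAt (fun y => u y i) (u' i) x := hasDerivAt_pi.mp hu
  have hvi : ∀ i, HasDerivAt (fun y => v y i) (v' i) x := hasDerivAt_pi.mp hv
  have h : HasDerivAt (fun y => mink (u y) (v y))
      (((-(u' 0 * v x 0 + u x 0 * v' 0) + (u' 1 * v x 1 + u x 1 * v' 1)) +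
        (u' 2 * v x 2 + u x 2 * v' 2)) + (u' 3 * v x 3 + u x 3 * v' 3)) x :=
    ((((hui 0).mul (hvi 0)).neg.add ((hui 1).mul (hvi 1))).add ((hui 2).mul (hvi 2))).add
      ((hui 3).mul (hvi 3))
  have e : mink u' (v x) + mink (u x) v'
      = ((-(u' 0 * v x 0 + u x 0 * v' 0) + (u' 1 * v x 1 + u x 1 * v' 1)) +
        (u' 2 * v x 2 + u x 2 * v' 2)) + (u' 3 * v x 3 + u x 3 * v' 3) := by
    simp only [mink]; ring
  rw [e]; exact h

end MinkLemmas

section Generic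
variable {E : Type*} [NormedAddCommGroup E] [NormedSpace ℝ E]

lemma hasDerivAt_fst {f : ℝ → ℝ → E}
    (hf : ContDiff ℝ (⊤ : ℕ∞) (fun p : ℝ × ℝ => f p.1 p.2)) (x y : ℝ) :
    HasDerivAt (fun x' => f x' y) (fderiv ℝ (fun p : ℝ × ℝ => f p.1 p.2) (x, y) (1, 0)) x := by
  have h1 : HasDerivAt (fun x' : ℝ => ((x', y) : ℝ × ℝ)) ((1 : ℝ), (0 : ℝ)) x :=
    (hasDerivAt_id x).prodMk (hasDerivAt_const x y)
  exact ((hf.differentiable (by simp) (x, y)).hasFDerivAt.comp_hasDerivAt x h1)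

lemma hasDerivAt_snd {f : ℝ → ℝ → E}
    (hf : ContDiff ℝ (⊤ : ℕ∞) (fun p : ℝ × ℝ => f p.1 p.2)) (x y : ℝ) :
    HasDerivAt (fun y' => f x y') (fderiv ℝ (fun p : ℝ × ℝ => f p.1 p.2) (x, y) (0, 1)) y := by
  have h1 : HasDerivAt (fun y' : ℝ => ((x, y') : ℝ × ℝ)) ((0 : ℝ), (1 : ℝ)) y :=
    (hasDerivAt_const y x).prodMk (hasDerivAt_id y)
  exact ((hf.differentiable (by simp) (x, y)).hasFDerivAt.comp_hasDerivAt y h1)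

lemma hasDerivAt_curry_fst {f : ℝ → ℝ → E}
    (hf : ContDiff ℝ (⊤ : ℕ∞) (fun p : ℝ × ℝ => f p.1 p.2)) (x y : ℝ) :
    HasDerivAt (fun x' => f x' y) (deriv (fun x' => f x' y) x) x := by
  have h := hasDerivAt_fst hf x y
  rw [h.deriv]; exact h

lemma hasDerivAt_curry_snd {f : ℝ → ℝ → E}
    (hf : ContDiff ℝ (⊤ : ℕ∞) (fun p : ℝ × ℝ => f p.1 p.2)) (x y : ℝ) :
    HasDerivAt (fun y' => f x y') (deriv (fun y' => f x y') y) y := by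
  have h := hasDerivAt_snd hf x y
  rw [h.deriv]; exact h

lemma smooth_pd {f : ℝ → ℝ → E}
    (hf : ContDiff ℝ (⊤ : ℕ∞) (fun p : ℝ × ℝ => f p.1 p.2)) (v : ℝ × ℝ) :
    ContDiff ℝ (⊤ : ℕ∞) (fun p : ℝ × ℝ => fderiv ℝ (fun q : ℝ × ℝ => f q.1 q.2) p v) := by
  exact (hf.fderiv_right (by exact_mod_cast le_top)).clm_apply contDiff_const

lemma smooth_ds {f : ℝ → ℝ → E}
    (hf : ContDiff ℝ (⊤ : ℕ∞) (fun p : ℝ × ℝ => f p.1 p.2)) :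
    ContDiff ℝ (⊤ : ℕ∞) (fun p : ℝ × ℝ => deriv (fun x' => f x' p.2) p.1) := by
  have h : (fun p : ℝ × ℝ => deriv (fun x' => f x' p.2) p.1)
      = fun p : ℝ × ℝ => fderiv ℝ (fun q : ℝ × ℝ => f q.1 q.2) p (1, 0) := by
    funext p
    exact (hasDerivAt_fst hf p.1 p.2).deriv
  rw [h]; exact smooth_pd hf _

lemma smooth_dt {f : ℝ → ℝ → E}
    (hf : ContDiff ℝ (⊤ : ℕ∞) (fun p : ℝ × ℝ => f p.1 p.2)) :
    ContDiff ℝ (⊤ : ℕ∞) (fun p : ℝ × ℝ => deriv (fun y' => f p.1 y') p.2) := by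
  have h : (fun p : ℝ × ℝ => deriv (fun y' => f p.1 y') p.2)
      = fun p : ℝ × ℝ => fderiv ℝ (fun q : ℝ × ℝ => f q.1 q.2) p (0, 1) := by
    funext p
    exact (hasDerivAt_snd hf p.1 p.2).deriv
  rw [h]; exact smooth_pd hf _

lemma deriv_swap {f : ℝ → ℝ → E}
    (hf : ContDiff ℝ (⊤ : ℕ∞) (fun p : ℝ × ℝ => f p.1 p.2)) (x y : ℝ) :
    deriv (fun x' => deriv (fun y' => f x' y') y) x
      = deriv (fun y' => deriv (fun x' => f x' y') x) y := by
  set F := fun p : ℝ × ℝ => f p.1 p.2 with hF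
  have hdF : Differentiable ℝ (fderiv ℝ F) :=
    (hf.fderiv_right (m := (⊤:ℕ∞)) (by exact_mod_cast le_top)).differentiable (by simp)
  -- LHS
  have e1 : (fun x' => deriv (fun y' => f x' y') y) = fun x' => fderiv ℝ F (x', y) (0, 1) := by
    funext x'; exact (hasDerivAt_snd hf x' y).deriv
  have e2 : (fun y' => deriv (fun x' => f x' y') x) = fun y' => fderiv ℝ F (x, y') (1, 0) := by
    funext y'; exact (hasDerivAt_fst hf x y').deriv
  have l1 : deriv (fun x' => fderiv ℝ F (x', y) (0, 1)) x
      = fderiv ℝ (fderiv ℝ F) (x, y) (1, 0) (0, 1) := by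
    have hg : HasFDerivAt (fun p : ℝ × ℝ => fderiv ℝ F p (0, 1))
        (((fderiv ℝ (fderiv ℝ F) (x, y)).flip) ((0 : ℝ), (1 : ℝ))) (x, y) := by
      have := (hdF (x, y)).hasFDerivAt.clm_apply (hasFDerivAt_const ((0 : ℝ), (1 : ℝ)) (x, y))
      simpa using this
    have h1 : HasDerivAt (fun x' : ℝ => ((x', y) : ℝ × ℝ)) ((1 : ℝ), (0 : ℝ)) x :=
      (hasDerivAt_id x).prodMk (hasDerivAt_const x y)
    have := hg.comp_hasDerivAt x h1
    simpa [Function.comp_def] using this.deriv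
  have l2 : deriv (fun y' => fderiv ℝ F (x, y') (1, 0)) y
      = fderiv ℝ (fderiv ℝ F) (x, y) (0, 1) (1, 0) := by
    have hg : HasFDerivAt (fun p : ℝ × ℝ => fderiv ℝ F p (1, 0))
        (((fderiv ℝ (fderiv ℝ F) (x, y)).flip) ((1 : ℝ), (0 : ℝ))) (x, y) := by
      have := (hdF (x, y)).hasFDerivAt.clm_apply (hasFDerivAt_const ((1 : ℝ), (0 : ℝ)) (x, y))
      simpa using this
    have h1 : HasDerivAt (fun y' : ℝ => ((x, y') : ℝ × ℝ)) ((0 : ℝ), (1 : ℝ)) y :=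
      (hasDerivAt_const y x).prodMk (hasDerivAt_id y)
    have := hg.comp_hasDerivAt y h1
    simpa [Function.comp_def] using this.deriv
  have hsymm : IsSymmSndFDerivAt ℝ F (x, y) :=
    hf.contDiffAt.isSymmSndFDerivAt (by simp; exact WithTop.coe_le_coe.mpr le_top)
  rw [e1, e2, l1, l2, hsymm (1, 0) (0, 1)]

end Generic

theorem curvature_evolution_k3_pseudo_null
    (γ T N B₁ B₂ : ℝ → ℝ → (Fin 4 → ℝ))
    (k₁ k₂ k₃ α₁ α₂ α₃ α₄ : ℝ → ℝ → ℝ)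
    (ψ₂ ψ₃ : ℝ → ℝ → ℝ)
    (hγsmooth : ContDiff ℝ (⊤ : ℕ∞) (fun p : ℝ × ℝ => γ p.1 p.2))
    (hTsmooth : ContDiff ℝ (⊤ : ℕ∞) (fun p : ℝ × ℝ => T p.1 p.2))
    (hNsmooth : ContDiff ℝ (⊤ : ℕ∞) (fun p : ℝ × ℝ => N p.1 p.2))
    (hB₁smooth : ContDiff ℝ (⊤ : ℕ∞) (fun p : ℝ × ℝ => B₁ p.1 p.2))
    (hB₂smooth : ContDiff ℝ (⊤ : ℕ∞) (fun p : ℝ × ℝ => B₂ p.1 p.2))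
    (hk₂smooth : ContDiff ℝ (⊤ : ℕ∞) (fun p : ℝ × ℝ => k₂ p.1 p.2))
    (hk₃smooth : ContDiff ℝ (⊤ : ℕ∞) (fun p : ℝ × ℝ => k₃ p.1 p.2))
    (hα₁smooth : ContDiff ℝ (⊤ : ℕ∞) (fun p : ℝ × ℝ => α₁ p.1 p.2))
    (hα₂smooth : ContDiff ℝ (⊤ : ℕ∞) (fun p : ℝ × ℝ => α₂ p.1 p.2))
    (hα₃smooth : ContDiff ℝ (⊤ : ℕ∞) (fun p : ℝ × ℝ => α₃ p.1 p.2))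
    (hα₄smooth : ContDiff ℝ (⊤ : ℕ∞) (fun p : ℝ × ℝ => α₄ p.1 p.2))
    (hTT : ∀ s t : ℝ, mink (T s t) (T s t) = 1)
    (hB₁B₁ : ∀ s t : ℝ, mink (B₁ s t) (B₁ s t) = 1)
    (hNN : ∀ s t : ℝ, mink (N s t) (N s t) = 0)
    (hB₂B₂ : ∀ s t : ℝ, mink (B₂ s t) (B₂ s t) = 0)
    (hNB₂ : ∀ s t : ℝ, mink (N s t) (B₂ s t) = 1)
    (hTN : ∀ s t : ℝ, mink (T s t) (N s t) = 0)
    (hTB₁ : ∀ s t : ℝ, mink (T s t) (B₁ s t) = 0)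
    (hTB₂ : ∀ s t : ℝ, mink (T s t) (B₂ s t) = 0)
    (hNB₁ : ∀ s t : ℝ, mink (N s t) (B₁ s t) = 0)
    (hB₁B₂ : ∀ s t : ℝ, mink (B₁ s t) (B₂ s t) = 0)
    -- arclength parametrization and pseudo null Frenet equations (k₁ = 1)
    (hk₁ : ∀ s t : ℝ, k₁ s t = 1)
    (hT : ∀ s t : ℝ, T s t = deriv (fun x => γ x t) s)
    (hunit : ∀ s t : ℝ, mnorm (deriv (fun x => γ x t) s) = 1)
    (hfr₁ : ∀ s t : ℝ, deriv (fun x => T x t) s = k₁ s t • N s t)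
    (hfr₂ : ∀ s t : ℝ, deriv (fun x => N x t) s = k₂ s t • B₁ s t)
    (hfr₃ : ∀ s t : ℝ, deriv (fun x => B₁ x t) s = k₃ s t • N s t - k₂ s t • B₂ s t)
    (hfr₄ : ∀ s t : ℝ, deriv (fun x => B₂ x t) s = -(k₁ s t) • T s t - k₃ s t • B₁ s t)
    (hflow : ∀ s t : ℝ, deriv (fun x => γ s x) t =
      α₁ s t • T s t + α₂ s t • N s t + α₃ s t • B₁ s t + α₄ s t • B₂ s t)
    -- inextensibility: ∂α₁/∂s = α₄
    (hinext : ∀ s t : ℝ, deriv (fun x => α₁ x t) s = α₄ s t)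
    (hψ₂ : ∀ s t : ℝ, ψ₂ s t = mink (deriv (fun x => N s x) t) (B₂ s t))
    (hψ₃ : ∀ s t : ℝ, ψ₃ s t = mink (deriv (fun x => B₁ s x) t) (B₂ s t)) :
    ∀ s t : ℝ, deriv (fun x => k₃ s x) t =
      deriv (fun x => ψ₃ x t) s - deriv (fun x => α₃ x t) s - α₂ s t * k₂ s t +
      α₄ s t * k₃ s t - ψ₂ s t * k₃ s t     := by
  intro s t
  -- symmetric versions of the metric relations
  have hNT : ∀ a b, mink (N a b) (T a b) = 0 := fun a b => (mink_comm _ _).trans (hTN a b)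
  have hB₁T : ∀ a b, mink (B₁ a b) (T a b) = 0 := fun a b => (mink_comm _ _).trans (hTB₁ a b)
  have hB₂T : ∀ a b, mink (B₂ a b) (T a b) = 0 := fun a b => (mink_comm _ _).trans (hTB₂ a b)
  have hB₁N : ∀ a b, mink (B₁ a b) (N a b) = 0 := fun a b => (mink_comm _ _).trans (hNB₁ a b)
  have hB₂N : ∀ a b, mink (B₂ a b) (N a b) = 1 := fun a b => (mink_comm _ _).trans (hNB₂ a b)
  have hB₂B₁ : ∀ a b, mink (B₂ a b) (B₁ a b) = 0 := fun a b => (mink_comm _ _).trans (hB₁B₂ a b)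
  -- ∂k₃/∂t
  have hk₃eq : (fun x : ℝ => k₃ s x) = fun x => mink (deriv (fun y => B₁ y x) s) (B₂ s x) := by
    funext x
    rw [hfr₃ s x, mink_sub_left, mink_smul_left, mink_smul_left, hNB₂ s x, hB₂B₂ s x]
    ring
  have hDsB₁ := hasDerivAt_curry_snd (f := fun a b => deriv (fun x' => B₁ x' b) a) (smooth_ds hB₁smooth) s t
  have hB₂t := hasDerivAt_curry_snd hB₂smooth s t
  have hE1 : deriv (fun x => k₃ s x) t
      = mink (deriv (fun x => deriv (fun y => B₁ y x) s) t) (B₂ s t)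
        + mink (deriv (fun y => B₁ y t) s) (deriv (fun x => B₂ s x) t) := by
    rw [hk₃eq]
    exact (hasDerivAt_mink hDsB₁ hB₂t).deriv
  -- ∂ψ₃/∂s
  have hψ₃eq : (fun x : ℝ => ψ₃ x t) = fun x => mink (deriv (fun y => B₁ x y) t) (B₂ x t) :=
    funext fun x => hψ₃ x t
  have hDtB₁f := hasDerivAt_curry_fst (f := fun a b => deriv (fun y' => B₁ a y') b) (smooth_dt hB₁smooth) s t
  have hB₂s := hasDerivAt_curry_fst hB₂smooth s t
  have hE2 : deriv (fun x => ψ₃ x t) s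
      = mink (deriv (fun x => deriv (fun y => B₁ x y) t) s) (B₂ s t)
        + mink (deriv (fun y => B₁ s y) t) (deriv (fun x => B₂ x t) s) := by
    rw [hψ₃eq]
    exact (hasDerivAt_mink hDtB₁f hB₂s).deriv
  -- differentiating constant pairings in t
  have key : ∀ (u v : ℝ → ℝ → (Fin 4 → ℝ)),
      ContDiff ℝ (⊤ : ℕ∞) (fun p : ℝ × ℝ => u p.1 p.2) →
      ContDiff ℝ (⊤ : ℕ∞) (fun p : ℝ × ℝ => v p.1 p.2) →
      ∀ c : ℝ, (∀ a b, mink (u a b) (v a b) = c) →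
      mink (deriv (fun x => u s x) t) (v s t) + mink (u s t) (deriv (fun x => v s x) t) = 0 := by
    intro u v hu hv c h
    have h1 := (hasDerivAt_mink (hasDerivAt_curry_snd hu s t) (hasDerivAt_curry_snd hv s t)).deriv
    have h2 : (fun x => mink (u s x) (v s x)) = fun _ => c := funext fun x => h s x
    rw [h2, deriv_const] at h1
    linarith
  have kB₂B₂ := key B₂ B₂ hB₂smooth hB₂smooth 0 hB₂B₂
  have kNB₂ := key N B₂ hNsmooth hB₂smooth 1 hNB₂
  have kB₁B₁ := key B₁ B₁ hB₁smooth hB₁smooth 1 hB₁B₁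
  have kTB₁ := key T B₁ hTsmooth hB₁smooth 0 hTB₁
  have m1 : mink (B₂ s t) (deriv (fun x => B₂ s x) t) = 0 := by
    have hc := mink_comm (deriv (fun x => B₂ s x) t) (B₂ s t)
    linarith
  have m2 : mink (N s t) (deriv (fun x => B₂ s x) t) = -ψ₂ s t := by
    have := hψ₂ s t
    linarith
  have m3 : mink (deriv (fun x => B₁ s x) t) (B₁ s t) = 0 := by
    have hc := mink_comm (deriv (fun x => B₁ s x) t) (B₁ s t)
    linarith
  have m4 : mink (deriv (fun y => B₁ y t) s) (deriv (fun x => B₂ s x) t)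
      = -(ψ₂ s t * k₃ s t) := by
    rw [hfr₃ s t, mink_sub_left, mink_smul_left, mink_smul_left, m2, m1]
    ring
  -- ∂T/∂t via commuting derivatives and the flow
  have hTt : deriv (fun x => T s x) t = deriv (fun x => deriv (fun y => γ x y) t) s := by
    have e : (fun x => T s x) = fun x => deriv (fun y => γ y x) s := funext fun x => hT s x
    rw [e]
    exact (deriv_swap hγsmooth s t).symm
  have hγt : (fun x => deriv (fun y => γ x y) t)
      = fun x => α₁ x t • T x t + α₂ x t • N x t + α₃ x t • B₁ x t + α₄ x t • B₂ x t :=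
    funext fun x => hflow x t
  have hW := ((((hasDerivAt_curry_fst hα₁smooth s t).smul
      (hasDerivAt_curry_fst hTsmooth s t)).add
      ((hasDerivAt_curry_fst hα₂smooth s t).smul (hasDerivAt_curry_fst hNsmooth s t))).add
      ((hasDerivAt_curry_fst hα₃smooth s t).smul (hasDerivAt_curry_fst hB₁smooth s t))).add
      ((hasDerivAt_curry_fst hα₄smooth s t).smul (hasDerivAt_curry_fst hB₂smooth s t))
  have hDtT : deriv (fun x => T s x) t
      = ((α₁ s t • deriv (fun x => T x t) s + deriv (fun x => α₁ x t) s • T s t)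
        + (α₂ s t • deriv (fun x => N x t) s + deriv (fun x => α₂ x t) s • N s t))
        + (α₃ s t • deriv (fun x => B₁ x t) s + deriv (fun x => α₃ x t) s • B₁ s t)
        + (α₄ s t • deriv (fun x => B₂ x t) s + deriv (fun x => α₄ x t) s • B₂ s t) := by
    rw [hTt, hγt]
    exact hW.deriv
  have m5 : mink (deriv (fun x => T s x) t) (B₁ s t)
      = α₂ s t * k₂ s t + deriv (fun x => α₃ x t) s - α₄ s t * k₃ s t := by
    rw [hDtT, hfr₁ s t, hfr₂ s t, hfr₃ s t, hfr₄ s t, hk₁ s t]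
    simp only [mink_add_left, mink_sub_left, mink_smul_left, hB₁T, hB₁N, hNB₁, hTB₁,
      hB₁B₁, hB₂B₁, hB₁B₂]
    ring
  have m6 : mink (deriv (fun x => B₁ s x) t) (T s t)
      = -(α₂ s t * k₂ s t + deriv (fun x => α₃ x t) s - α₄ s t * k₃ s t) := by
    have hc := mink_comm (T s t) (deriv (fun x => B₁ s x) t)
    linarith
  have m7 : mink (deriv (fun y => B₁ s y) t) (deriv (fun x => B₂ x t) s)
      = α₂ s t * k₂ s t + deriv (fun x => α₃ x t) s - α₄ s t * k₃ s t := by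
    rw [hfr₄ s t, hk₁ s t, mink_sub_right, mink_smul_right, mink_smul_right, m6, m3]
    ring
  rw [hE1, hE2, ← deriv_swap hB₁smooth s t, m4, m7]
  ring
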